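/- Let p ≥ 2, M > 0, and σ² > 0. Then (1/2)√p·σ ≤ Ψ_p(M, σ²) ≤ max{(1/2)√p·σ, (1/(2e))·p·M}. -/

import Mathlib

noncomputable def Psi (p M s2 : ℝ) : ℝ :=
  if p < Real.log (p * M ^ 2 / s2) then (s2 / (p * M ^ 2)) ^ (1 / p) * M
  else if p < (Real.exp 1) ^ 2 * s2 / M ^ 2 then (1 / 2) * Real.sqrt p * Real.sqrt s2
  else p / (Real.exp 1 * Real.log (p * M ^ 2 / s2)) * M

lemma aux_le_exp (x : ℝ) : x ≤ Real.exp (x - 1) := by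
  have := Real.add_one_le_exp (x - 1); linarith

lemma sqrt_exp' (x : ℝ) : Real.sqrt (Real.exp x) = Real.exp (x / 2) := by
  have h : Real.exp x = Real.exp (x / 2) * Real.exp (x / 2) := by
    rw [← Real.exp_add]; ring_nf
  rw [h, Real.sqrt_mul_self (Real.exp_nonneg _)]

theorem psi_bounds (p M s2 : ℝ) (hp : 2 ≤ p) (hM : 0 < M) (hs : 0 < s2) :
    (1 / 2) * Real.sqrt p * Real.sqrt s2 ≤ Psi p M s2 ∧
    Psi p M s2 ≤ max ((1 / 2) * Real.sqrt p * Real.sqrt s2)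
      ((1 / (2 * Real.exp 1)) * p * M) := by
  have hp0 : (0:ℝ) < p := by linarith
  have hA : 0 < p * M ^ 2 / s2 := by positivity
  set L := Real.log (p * M ^ 2 / s2) with hLdef
  have hexpL : Real.exp L = p * M ^ 2 / s2 := Real.exp_log hA
  have hs2 : s2 = p * M ^ 2 * Real.exp (-L) := by
    rw [Real.exp_neg, hexpL]; field_simp
  have hsqrt : Real.sqrt s2 = Real.sqrt p * M * Real.exp (-L / 2) := by
    rw [hs2, Real.sqrt_mul (by positivity), Real.sqrt_mul (by positivity),
      Real.sqrt_sq hM.le, sqrt_exp']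
  have he : (0:ℝ) < Real.exp 1 := Real.exp_pos 1
  unfold Psi
  rw [← hLdef]
  split_ifs with h1 h2
  · -- case p < L
    have hL2 : (2:ℝ) < L := lt_of_le_of_lt hp h1
    have hbase : s2 / (p * M ^ 2) = Real.exp (-L) := by
      rw [Real.exp_neg, hexpL]; field_simp
    have hval : (s2 / (p * M ^ 2)) ^ (1 / p) = Real.exp (-L / p) := by
      rw [hbase, ← Real.exp_mul]
      congr 1; ring
    rw [hval]
    constructor
    · rw [hsqrt]
      have key : p / 2 ≤ Real.exp (L / 2 - L / p) := by
        have h1' : p / 2 - 1 ≤ L / 2 - L / p := by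
          rw [← mul_le_mul_iff_right₀ hp0]
          have hLp : p * (L / p) = L := by field_simp
          nlinarith [mul_nonneg (sub_nonneg.mpr h1.le) (sub_nonneg.mpr hp)]
        calc p / 2 ≤ Real.exp (p / 2 - 1) := aux_le_exp _
          _ ≤ _ := Real.exp_le_exp.mpr h1'
      have hmul : Real.exp (L / 2 - L / p) * Real.exp (-L / 2) = Real.exp (-L / p) := by
        rw [← Real.exp_add]; ring_nf
      have he2 : (0:ℝ) < Real.exp (-L / 2) := Real.exp_pos _
      have hsp : Real.sqrt p * Real.sqrt p = p := Real.mul_self_sqrt hp0.le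
      calc 1 / 2 * Real.sqrt p * (Real.sqrt p * M * Real.exp (-L / 2))
          = (p / 2) * Real.exp (-L / 2) * M := by rw [show 1 / 2 * Real.sqrt p * (Real.sqrt p * M * Real.exp (-L / 2)) = (Real.sqrt p * Real.sqrt p) / 2 * Real.exp (-L / 2) * M by ring, hsp]
        _ ≤ Real.exp (L / 2 - L / p) * Real.exp (-L / 2) * M := by
            apply mul_le_mul_of_nonneg_right _ hM.le
            exact mul_le_mul_of_nonneg_right key he2.le
        _ = Real.exp (-L / p) * M := by rw [hmul]
    · apply le_max_of_le_right
      have h1' : Real.exp (-L / p) ≤ Real.exp (-1 : ℝ) := by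
        apply Real.exp_le_exp.mpr
        rw [div_le_iff₀ hp0] at *
        nlinarith
      have : Real.exp (-1 : ℝ) = 1 / Real.exp 1 := by
        rw [Real.exp_neg]; field_simp
      calc Real.exp (-L / p) * M ≤ (1 / Real.exp 1) * M := by
            apply mul_le_mul_of_nonneg_right _ hM.le; rw [← this]; exact h1'
        _ ≤ 1 / (2 * Real.exp 1) * p * M := by
            apply mul_le_mul_of_nonneg_right _ hM.le
            rw [div_mul_eq_mul_div, div_le_div_iff₀ he (by positivity)]
            nlinarith
  · exact ⟨le_refl _, le_max_left _ _⟩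
  · -- case 3
    push_neg at h1 h2
    have hL2 : (2:ℝ) ≤ L := by
      have he2 : Real.exp 1 ^ 2 ≤ p * M ^ 2 / s2 := by
        rw [le_div_iff₀ hs]
        rw [div_le_iff₀ (by positivity)] at h2
        nlinarith
      calc (2:ℝ) = Real.log (Real.exp 1 ^ 2) := by
            rw [← Real.exp_nat_mul]; norm_num [Real.log_exp]
        _ ≤ L := Real.log_le_log (by positivity) he2
    have hL0 : (0:ℝ) < L := by linarith
    constructor
    · rw [hsqrt]
      -- need (1/2) p M exp(-L/2) ≤ p/(e L) M
      have key : Real.exp 1 * L * Real.exp (-L / 2) ≤ 2 := by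
        have h := aux_le_exp (L / 2)
        have hx : Real.exp (L / 2 - 1) = Real.exp (L / 2) / Real.exp 1 := by
          rw [Real.exp_sub]
        rw [hx] at h
        have hE : Real.exp (-L / 2) = 1 / Real.exp (L / 2) := by
          rw [show (-L / 2 : ℝ) = -(L / 2) by ring, Real.exp_neg, inv_eq_one_div]
        rw [hE]
        rw [le_div_iff₀ he] at h
        have hp2 : (0:ℝ) < Real.exp (L / 2) := Real.exp_pos _
        rw [mul_one_div, div_le_iff₀ hp2]
        nlinarith
      have hsp : Real.sqrt p * Real.sqrt p = p := Real.mul_self_sqrt hp0.le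
      have : 1 / 2 * Real.sqrt p * (Real.sqrt p * M * Real.exp (-L / 2))
          = p * Real.exp (-L / 2) / 2 * M := by
        rw [show 1 / 2 * Real.sqrt p * (Real.sqrt p * M * Real.exp (-L / 2)) = (Real.sqrt p * Real.sqrt p) * Real.exp (-L / 2) / 2 * M by ring, hsp]
      rw [this]
      apply mul_le_mul_of_nonneg_right _ hM.le
      rw [div_le_div_iff₀ (by norm_num) (by positivity)]
      have hEpos : (0:ℝ) < Real.exp (-L / 2) := Real.exp_pos _
      nlinarith [mul_le_mul_of_nonneg_left key hp0.le]
    · apply le_max_of_le_right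
      apply mul_le_mul_of_nonneg_right _ hM.le
      rw [div_le_iff₀ (by positivity), mul_comm (1 / (2 * Real.exp 1)) p, mul_assoc]
      have : (1:ℝ) ≤ 1 / (2 * Real.exp 1) * (Real.exp 1 * L) := by
        rw [one_div, inv_mul_eq_div, le_div_iff₀ (by positivity)]
        nlinarith
      nlinarith
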